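/- Let f : V → End(V) be a function assigning to each x ∈ V a self-adjoint linear map f(x), such that f is additive/linear in x and f(x)x = 0 for all x ∈ V. Then f(x) = 0 for all x. -/

import Mathlib

theorem stmt12 {V : Type*} [AddCommGroup V] [Module ℝ V] [FiniteDimensional ℝ V]
    (B : LinearMap.BilinForm ℝ V) (hsymm : ∀ x y, B x y = B y x)
    (hnd : B.Nondegenerate)
    -- f is linear in x, each f(x) is self-adjoint, and f(x)x = 0
    (f : V →ₗ[ℝ] Module.End ℝ V)
    (hsa : ∀ x y z, B (f x y) z = B y (f x z))
    (hxx : ∀ x, f x x = 0) :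
    ∀ x, f x = 0 := by
  -- polarization: f x y + f y x = 0
  have hpol : ∀ x y : V, f x y + f y x = 0 := by
    intro x y
    have h := hxx (x + y)
    simp [map_add, hxx] at h
    linear_combination (norm := module) h
  -- (f x y, y) = 0
  have h2 : ∀ x y : V, B (f x y) y = 0 := by
    intro x y
    have h1 : f x y = - f y x := by
      have := hpol x y; linear_combination (norm := module) this
    calc B (f x y) y = B y (f x y) := hsymm _ _
      _ = B y (-(f y x)) := by rw [h1]
      _ = - B y (f y x) := by simp
      _ = - B (f y y) x := by rw [hsa]
      _ = 0 := by simp [hxx]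
  -- polarize in y: B (f x y) z + B (f x z) y = 0
  have h3 : ∀ x y z : V, B (f x y) z + B (f x z) y = 0 := by
    intro x y z
    have h := h2 x (y + z)
    simp only [map_add, LinearMap.add_apply] at h
    rw [h2 x y, h2 x z] at h
    linarith [hsymm (f x y) z, hsymm (f x z) y,
      show B (f x y) y = 0 from h2 x y]
  -- combine with self-adjointness
  have h4 : ∀ x y z : V, B (f x y) z = 0 := by
    intro x y z
    have a := h3 x y z
    have b : B (f x z) y = B (f x y) z := by
      rw [hsymm (f x z) y, hsa, hsymm]
    linarith
  intro x
  ext y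
  exact hnd.1 _ (fun z => h4 x y z)
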